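/- For N = 2 and m₀(z) = (1+z³)/√2, the function h(e^{-iω}) = (1/9)(1 + 2cos ω)² satisfies R(h) = h, where R is the Ruelle operator (Rf)(z) = (1/2) ∑_{w²=z} |m₀(w)|² f(w). -/

import Mathlib

open MeasureTheory Filter Set
open scoped Real ENNReal

/-- The Ruelle transfer operator of order `N` with filter `m₀`, on complex
functions on the circle (encoded as `1`-periodic functions on `ℝ`):
`(Rf)(x) = (1/N) ∑_{k<N} |m₀((x+k)/N)|² f((x+k)/N)`. -/
noncomputable def ruelle (N : ℕ) (m₀ : ℝ → ℂ) (f : ℝ → ℂ) : ℝ → ℂ :=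
  fun x => (N : ℂ)⁻¹ *
    ∑ k ∈ Finset.range N, (‖m₀ ((x + k) / N)‖ : ℂ) ^ 2 * f ((x + k) / N)

/-- The Ruelle transfer operator acting on real-valued functions. -/
noncomputable def ruelleR (N : ℕ) (m₀ : ℝ → ℂ) (h : ℝ → ℝ) : ℝ → ℝ :=
  fun x => (N : ℝ)⁻¹ *
    ∑ k ∈ Finset.range N, ‖m₀ ((x + k) / N)‖ ^ 2 * h ((x + k) / N)

/-- The filter `m₀(z) = (1 + z³)/√2`, with `z = e^{2πix}`. -/
noncomputable def m3 : ℝ → ℂ :=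
  fun x => (1 + Complex.exp (2 * (Real.pi : ℂ) * Complex.I * (3 * (x : ℂ))))
    / (Real.sqrt 2 : ℂ)

/-- The harmonic function `h(e^{-iω}) = (1/9)(1 + 2cos ω)²`. -/
noncomputable def hfun : ℝ → ℝ :=
  fun x => (1/9) * (1 + 2 * Real.cos (2 * Real.pi * x)) ^ 2


lemma m3_norm_sq (y : ℝ) : ‖m3 y‖ ^ 2 = 1 + Real.cos (6 * Real.pi * y) := by
  have h1 : (2 * (Real.pi : ℂ) * Complex.I * (3 * (y : ℂ)))
      = ((6 * Real.pi * y : ℝ) : ℂ) * Complex.I := by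
    push_cast; ring
  unfold m3
  rw [h1, norm_div, div_pow]
  have h2 : ‖(1 : ℂ) + Complex.exp (((6 * Real.pi * y : ℝ) : ℂ) * Complex.I)‖ ^ 2
      = 2 + 2 * Real.cos (6 * Real.pi * y) := by
    rw [Complex.sq_norm, Complex.normSq_apply]
    rw [Complex.add_re, Complex.add_im, Complex.one_re, Complex.one_im,
      Complex.exp_ofReal_mul_I_re, Complex.exp_ofReal_mul_I_im]
    nlinarith [Real.sin_sq_add_cos_sq (6 * Real.pi * y)]
  have h3 : ‖((Real.sqrt 2 : ℝ) : ℂ)‖ ^ 2 = 2 := by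
    rw [Complex.norm_real, Real.norm_eq_abs, sq_abs, Real.sq_sqrt] ; norm_num
  rw [h2, h3]; ring

/-- for `N = 2`, `m₀(z) = (1+z³)/√2`, the function
`h(e^{-iω}) = (1/9)(1+2cos ω)²` satisfies `R(h) = h`. -/
theorem stmt10 : ∀ x : ℝ, ruelleR 2 m3 hfun x = hfun x := by
  intro x
  unfold ruelleR
  simp only [Finset.sum_range_succ, Finset.sum_range_zero, zero_add,
    Nat.cast_ofNat, Nat.cast_zero, Nat.cast_one]
  rw [m3_norm_sq, m3_norm_sq]
  unfold hfun
  have e1 : 6 * Real.pi * ((x + 0) / 2) = 3 * (Real.pi * x) := by ring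
  have e2 : 6 * Real.pi * ((x + 1) / 2) = 3 * (Real.pi * x) + Real.pi + 2 * Real.pi := by ring
  have e3 : 2 * Real.pi * ((x + 0) / 2) = Real.pi * x := by ring
  have e4 : 2 * Real.pi * ((x + 1) / 2) = Real.pi * x + Real.pi := by ring
  have e5 : 2 * Real.pi * x = 2 * (Real.pi * x) := by ring
  rw [e1, e2, e3, e4, e5, Real.cos_add_two_pi, Real.cos_add_pi, Real.cos_add_pi,
    Real.cos_three_mul, Real.cos_two_mul]
  ring
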